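/- arXiv:1407.2373 — 2 statements merged into one kernel-verified Lean document; each statement's English description precedes it below -/
import Mathlib

section
/- For an odd prime p, the ring of integers of ℚ(ζ_p + ζ_p^{-1}) is ℤ[ζ_p + ζ_p^{-1}]. -/
open Polynomial Finset

lemma cheb_mem (ζ : ℂ) (hz : ζ ≠ 0) (n : ℕ) :
    ζ ^ n + ζ⁻¹ ^ n ∈ Algebra.adjoin ℤ ({ζ + ζ⁻¹} : Set ℂ) := by
  induction n using Nat.strong_induction_on with
  | _ n ih =>
    match n with
    | 0 => simpa using Subalgebra.add_mem _ (Subalgebra.one_mem _) (Subalgebra.one_mem _)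
    | 1 => simpa using Algebra.self_mem_adjoin_singleton ℤ _
    | (n+2) =>
      have key : ζ ^ (n+2) + ζ⁻¹ ^ (n+2)
          = (ζ + ζ⁻¹) * (ζ ^ (n+1) + ζ⁻¹ ^ (n+1)) - (ζ ^ n + ζ⁻¹ ^ n) := by
        have h : ζ * ζ⁻¹ = 1 := mul_inv_cancel₀ hz
        linear_combination (-(ζ ^ n + ζ⁻¹ ^ n)) * h
      rw [key]
      exact Subalgebra.sub_mem _
        (Subalgebra.mul_mem _ (Algebra.self_mem_adjoin_singleton ℤ _) (ih _ (by omega)))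
        (ih _ (by omega))

lemma linind (p : ℕ) (hp : p.Prime) (ζ : ℂ) (hζ : IsPrimitiveRoot ζ p)
    (c : ℕ → ℤ) (hc0 : c 0 = 0)
    (h : ∑ j ∈ Finset.range p, (c j : ℂ) * ζ ^ j = 0) :
    ∀ j < p, c j = 0 := by
  have hgeom : ∑ i ∈ Finset.range p, ζ ^ i = 0 := hζ.geom_sum_eq_zero hp.one_lt
  have hp1 : p - 1 + 1 = p := Nat.succ_pred_eq_of_pos hp.pos
  have h2 : ∑ j ∈ Finset.range (p-1), ((c j - c (p-1) : ℤ) : ℂ) * ζ ^ j = 0 := by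
    have e1 : ∑ j ∈ Finset.range p, (c j : ℂ) * ζ ^ j
        = ∑ j ∈ Finset.range (p-1), (c j : ℂ) * ζ ^ j + (c (p-1) : ℂ) * ζ ^ (p-1) := by
      rw [← Finset.sum_range_succ, hp1]
    have e2 : ∑ i ∈ Finset.range p, ζ ^ i
        = ∑ i ∈ Finset.range (p-1), ζ ^ i + ζ ^ (p-1) := by
      rw [← Finset.sum_range_succ, hp1]
    rw [e2] at hgeom
    have e3 : ζ ^ (p-1) = - ∑ i ∈ Finset.range (p-1), ζ ^ i := by
      rw [eq_neg_iff_add_eq_zero, add_comm]; exact hgeom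
    rw [e1, e3, mul_neg, Finset.mul_sum] at h
    rw [← sub_eq_add_neg] at h
    rw [← h, ← Finset.sum_sub_distrib]
    refine Finset.sum_congr rfl fun j _ => by push_cast; ring
  set q : ℚ[X] := ∑ j ∈ Finset.range (p-1), C ((c j - c (p-1) : ℤ) : ℚ) * X ^ j with hq
  have haq : aeval ζ q = 0 := by
    rw [hq, map_sum, ← h2]
    refine Finset.sum_congr rfl fun j _ => ?_
    rw [map_mul, map_pow, aeval_X, aeval_C]
    norm_num
  have hqdeg : q.degree < ((p - 1 : ℕ) : WithBot ℕ) := by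
    refine lt_of_le_of_lt (Polynomial.degree_sum_le _ _) ?_
    rw [Finset.sup_lt_iff (by exact WithBot.bot_lt_coe _)]
    intro j hj
    exact lt_of_le_of_lt (Polynomial.degree_C_mul_X_pow_le _ _)
      (by exact_mod_cast Finset.mem_range.mp hj)
  have hq0 : q = 0 := by
    by_contra hne
    have hd := minpoly.degree_le_of_ne_zero ℚ ζ hne haq
    rw [← Polynomial.cyclotomic_eq_minpoly_rat hζ hp.pos] at hd
    have hdc : (Polynomial.cyclotomic p ℚ).degree = ((p - 1 : ℕ) : WithBot ℕ) := by
      rw [Polynomial.degree_cyclotomic, Nat.totient_prime hp]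
    rw [hdc] at hd
    exact absurd (lt_of_le_of_lt hd hqdeg) (lt_irrefl _)
  have hcoeff : ∀ j < p - 1, c j = c (p-1) := by
    intro j hj
    have hcj : q.coeff j = ((c j - c (p-1) : ℤ) : ℚ) := by
      rw [hq, Polynomial.finset_sum_coeff, Finset.sum_eq_single j]
      · rw [Polynomial.coeff_C_mul, Polynomial.coeff_X_pow]; simp
      · intro b _ hb
        rw [Polynomial.coeff_C_mul, Polynomial.coeff_X_pow, if_neg (Ne.symm hb), mul_zero]
      · intro hnj; exact absurd (Finset.mem_range.mpr hj) hnj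
    rw [hq0, Polynomial.coeff_zero] at hcj
    have : (c j - c (p-1) : ℤ) = 0 := by exact_mod_cast hcj.symm
    omega
  have hple : 0 < p - 1 := by have := hp.two_le; omega
  have hcp : c (p-1) = 0 := by have := hcoeff 0 hple; omega
  intro j hj
  rcases lt_or_ge j (p-1) with h' | h'
  · have := hcoeff j h'; omega
  · have : j = p - 1 := by omega
    rw [this]; exact hcp

lemma refl_sum (p a b : ℕ) (hb : b ≤ p) (g : ℕ → ℂ) :
    ∑ j ∈ Finset.Ico a b, g j = ∑ j ∈ Finset.Ico (p-b+1) (p-a+1), g (p - j) := by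
  refine Finset.sum_nbij' (fun j => p - j) (fun j => p - j) ?_ ?_ ?_ ?_ ?_ <;>
    intro j hj <;> simp only [Finset.mem_Ico] at * <;> first | omega | (congr 1 ; omega)

lemma core_sym (p : ℕ) (hp : p.Prime) (hodd : Odd p) (ζ : ℂ) (hζ : IsPrimitiveRoot ζ p)
    (f : ℤ[X]) (hsym : aeval ζ⁻¹ f = aeval ζ f) :
    aeval ζ f ∈ Algebra.adjoin ℤ ({ζ + ζ⁻¹} : Set ℂ) := by
  have hz0 : ζ ≠ 0 := hζ.ne_zero hp.ne_zero
  have hzp : ζ ^ p = 1 := hζ.pow_eq_one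
  have hzpi : (ζ⁻¹) ^ p = 1 := by rw [inv_pow, hzp, inv_one]
  set q : ℤ[X] := X ^ p - C 1 with hqdef
  have hq : q.Monic := Polynomial.monic_X_pow_sub_C 1 hp.ne_zero
  set r : ℤ[X] := f %ₘ q with hrdef
  have key : ∀ z : ℂ, z ^ p = 1 → aeval z f = aeval z r := by
    intro z hz
    have hq0 : aeval z q = 0 := by rw [hqdef]; simp [hz]
    conv_lhs => rw [← Polynomial.modByMonic_add_div f q]
    rw [map_add, map_mul, hq0, zero_mul, add_zero]
  have hrdeg : r.natDegree < p := by
    have h1 : r.degree < q.degree := Polynomial.degree_modByMonic_lt f hq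
    have h2 : q.degree = p := by
      rw [hqdef]; simpa using Polynomial.degree_X_pow_sub_C hp.pos (1 : ℤ)
    rcases eq_or_ne r 0 with h0 | h0
    · rw [h0]; simpa using hp.pos
    · rw [Polynomial.natDegree_lt_iff_degree_lt h0, ← h2]; exact h1
  set a : ℕ → ℤ := fun j => r.coeff j with hadef
  have hev : ∀ z : ℂ, z ^ p = 1 → aeval z f = ∑ j ∈ Finset.range p, (a j : ℂ) * z ^ j := by
    intro z hz
    rw [key z hz, Polynomial.aeval_eq_sum_range' hrdeg]
    exact Finset.sum_congr rfl fun j _ => by rw [zsmul_eq_mul]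
  have hinv : ∀ j, 0 < j → j < p → (ζ⁻¹) ^ j = ζ ^ (p - j) := by
    intro j h1 h2
    rw [inv_pow]
    refine inv_eq_of_mul_eq_one_left ?_
    rw [← pow_add, Nat.sub_add_cancel (le_of_lt h2), hzp]
  have hsplit : ∀ z : ℂ, ∑ j ∈ Finset.range p, (a j : ℂ) * z ^ j
      = (a 0 : ℂ) + ∑ j ∈ Finset.Ico 1 p, (a j : ℂ) * z ^ j := by
    intro z
    rw [Finset.range_eq_Ico, Finset.sum_eq_sum_Ico_succ_bot hp.pos]
    simp
  -- rewrite the ζ⁻¹ sum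
  have hinvsum : ∑ j ∈ Finset.Ico 1 p, (a j : ℂ) * (ζ⁻¹) ^ j
      = ∑ j ∈ Finset.Ico 1 p, (a (p - j) : ℂ) * ζ ^ j := by
    have := refl_sum p 1 p le_rfl (fun j => (a (p - j) : ℂ) * ζ ^ j)
    have he : p - 1 + 1 = p := by omega
    rw [Nat.sub_self, zero_add, he] at this
    rw [this]
    refine Finset.sum_congr rfl fun j hj => ?_
    rw [Finset.mem_Ico] at hj
    rw [Nat.sub_sub_self (le_of_lt hj.2), hinv j hj.1 hj.2]
  -- symmetry of coefficients
  have hsymc : ∀ j, 1 ≤ j → j < p → a j = a (p - j) := by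
    set c : ℕ → ℤ := fun j => if j = 0 then 0 else a j - a (p - j) with hcdef
    have hcsum : ∑ j ∈ Finset.range p, (c j : ℂ) * ζ ^ j = 0 := by
      have e1 := hev ζ hzp
      have e2 := hev ζ⁻¹ hzpi
      rw [e1, e2, hsplit, hsplit, hinvsum, add_right_inj] at hsym
      rw [Finset.range_eq_Ico, Finset.sum_eq_sum_Ico_succ_bot hp.pos]
      have hc00 : ((c 0 : ℤ) : ℂ) * ζ ^ 0 = 0 := by rw [hcdef]; norm_num
      rw [hc00, zero_add]
      calc ∑ j ∈ Finset.Ico 1 p, ((c j : ℤ) : ℂ) * ζ ^ j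
          = ∑ j ∈ Finset.Ico 1 p, ((a j : ℂ) - (a (p - j) : ℂ)) * ζ ^ j := by
            refine Finset.sum_congr rfl fun j hj => ?_
            rw [Finset.mem_Ico] at hj
            rw [hcdef]
            simp only [if_neg (by omega : ¬ j = 0)]
            push_cast
            ring
        _ = ∑ j ∈ Finset.Ico 1 p, (a j : ℂ) * ζ ^ j
              - ∑ j ∈ Finset.Ico 1 p, (a (p - j) : ℂ) * ζ ^ j := by
            rw [← Finset.sum_sub_distrib]
            exact Finset.sum_congr rfl fun j _ => by ring
        _ = 0 := by rw [hsym, sub_self]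
    have := linind p hp ζ hζ c (by rw [hcdef]; simp) hcsum
    intro j h1 h2
    have := this j h2
    rw [hcdef] at this
    simp only [if_neg (by omega : ¬ j = 0)] at this
    omega
  -- final assembly
  rw [hev ζ hzp, hsplit]
  have hm : p = 2 * (p / 2) + 1 := by
    rcases hodd with ⟨k, hk⟩; omega
  have hsplit2 : ∑ j ∈ Finset.Ico 1 p, (a j : ℂ) * ζ ^ j
      = ∑ j ∈ Finset.Ico 1 (p/2+1), (a j : ℂ) * ζ ^ j
        + ∑ j ∈ Finset.Ico (p/2+1) p, (a j : ℂ) * ζ ^ j := by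
    rw [Finset.sum_Ico_consecutive]
    · omega
    · omega
  have hsecond : ∑ j ∈ Finset.Ico (p/2+1) p, (a j : ℂ) * ζ ^ j
      = ∑ j ∈ Finset.Ico 1 (p/2+1), (a j : ℂ) * (ζ⁻¹) ^ j := by
    have := refl_sum p (p/2+1) p le_rfl (fun j => (a j : ℂ) * ζ ^ j)
    rw [Nat.sub_self, zero_add] at this
    have he : p - (p/2+1) + 1 = p/2 + 1 := by omega
    rw [he] at this
    rw [this]
    refine Finset.sum_congr rfl fun j hj => ?_
    rw [Finset.mem_Ico] at hj
    have h1 : 1 ≤ j := hj.1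
    have h2 : j < p := by omega
    rw [← hsymc j h1 h2, hinv j h1 h2]
  rw [hsplit2, hsecond, ← Finset.sum_add_distrib]
  refine Subalgebra.add_mem _ ?_ (Subalgebra.sum_mem _ fun j hj => ?_)
  · exact Subalgebra.intCast_mem _ _
  · have : (a j : ℂ) * ζ ^ j + (a j : ℂ) * (ζ⁻¹) ^ j = (a j : ℂ) * (ζ ^ j + (ζ⁻¹) ^ j) := by
      ring
    rw [this]
    exact Subalgebra.mul_mem _ (Subalgebra.intCast_mem _ _) (cheb_mem ζ hz0 j)

/-- For an odd prime `p`, the ring of integers of `ℚ(ζ_p + ζ_p⁻¹)` is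
`ℤ[ζ_p + ζ_p⁻¹]`. -/
theorem ringOfIntegers_eq_adjoin (p : ℕ) (hp : p.Prime) (hodd : Odd p)
    (ζ : ℂ) (hζ : IsPrimitiveRoot ζ p)
    (K : IntermediateField ℚ ℂ) (hK : K = IntermediateField.adjoin ℚ {ζ + ζ⁻¹})
    (x : K) (hx : (x : ℂ) = ζ + ζ⁻¹) :
    integralClosure ℤ K = Algebra.adjoin ℤ {x} := by
  have hz0 : ζ ≠ 0 := hζ.ne_zero hp.ne_zero
  have hzp : ζ ^ p = 1 := hζ.pow_eq_one
  -- conj ζ = ζ⁻¹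
  have habs : ‖ζ‖ = 1 := by
    exact hζ.norm'_eq_one hp.ne_zero
  have h1 : ζ * (starRingEnd ℂ) ζ = 1 := by
    rw [Complex.mul_conj]
    norm_cast
    rw [Complex.normSq_eq_norm_sq, habs, one_pow]
  have hconjz : (starRingEnd ℂ) ζ = ζ⁻¹ := (inv_eq_of_mul_eq_one_right h1).symm
  -- integrality facts
  have hzint : IsIntegral ℤ ζ := hζ.isIntegral hp.pos
  have hzinv : ζ⁻¹ = ζ ^ (p - 1) := by
    refine inv_eq_of_mul_eq_one_right ?_
    have h2 : p - 1 + 1 = p := Nat.sub_add_cancel hp.one_lt.le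
    rw [← pow_succ', h2, hzp]
  have hηint : IsIntegral ℤ (ζ + ζ⁻¹) := by
    refine hzint.add ?_
    rw [hzinv]; exact hzint.pow _
  have hinjK : Function.Injective (algebraMap K ℂ) := (algebraMap K ℂ).injective
  have halgK : ∀ z : K, algebraMap K ℂ z = (z : ℂ) := fun z => rfl
  have hfix : ∀ z ∈ K, (starRingEnd ℂ) z = z := by
    intro z hz
    rw [hK] at hz
    induction hz using IntermediateField.adjoin_induction with
    | mem a ha =>
      rw [Set.mem_singleton_iff] at ha
      subst ha
      rw [map_add, hconjz, map_inv₀, hconjz, inv_inv, add_comm]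
    | algebraMap q => simp
    | add a b _ _ ha hb => rw [map_add, ha, hb]
    | inv a _ ha => rw [map_inv₀, ha]
    | mul a b _ _ ha hb => rw [map_mul, ha, hb]
  apply le_antisymm
  · -- hard direction
    intro y hy
    have hyint : IsIntegral ℤ y := hy
    set w : ℂ := (y : ℂ) with hwdef
    have hwint : IsIntegral ℤ w := by
      rw [hwdef, ← halgK y]
      exact hyint.map (RingHom.toIntAlgHom (algebraMap K ℂ))
    -- w lies in ℚ(ζ)
    set E := IntermediateField.adjoin ℚ ({ζ} : Set ℂ) with hEdef
    have hζE : ζ ∈ E := IntermediateField.mem_adjoin_simple_self ℚ ζ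
    have hKE : K ≤ E := by
      rw [hK, IntermediateField.adjoin_le_iff]
      intro z hz
      rw [Set.mem_singleton_iff] at hz
      subst hz
      exact add_mem hζE (inv_mem hζE)
    have hwE : w ∈ E := hKE y.2
    -- cyclotomic extension instance on E
    set P : ℕ+ := ⟨p, hp.pos⟩ with hPdef
    have hζP : IsPrimitiveRoot ζ (P : ℕ) := hζ
    have hEA : E.toSubalgebra = Algebra.adjoin ℚ ({ζ} : Set ℂ) :=
      IntermediateField.adjoin_simple_toSubalgebra_of_isAlgebraic hzint.tower_top.isAlgebraic
    haveI hcycA : IsCyclotomicExtension {(P : ℕ)} ℚ (Algebra.adjoin ℚ ({ζ} : Set ℂ)) :=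
      hζP.adjoin_isCyclotomicExtension ℚ
    haveI hcycE : IsCyclotomicExtension {(P : ℕ)} ℚ E := by
      refine IsCyclotomicExtension.equiv {(P : ℕ)} ℚ _
        (Subalgebra.equivOfEq _ _ hEA.symm : (Algebra.adjoin ℚ ({ζ} : Set ℂ)) ≃ₐ[ℚ] E.toSubalgebra)
    set ζ' : E := ⟨ζ, hζE⟩ with hζ'def
    have hζ'p : IsPrimitiveRoot ζ' (P : ℕ) := IsPrimitiveRoot.coe_submonoidClass_iff.mp hζP
    haveI hfact : Fact (Nat.Prime (P : ℕ)) := ⟨hp⟩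
    haveI hic : IsIntegralClosure (Algebra.adjoin ℤ ({ζ'} : Set E)) ℤ E :=
      IsCyclotomicExtension.Rat.isIntegralClosure_adjoin_singleton_of_prime hζ'p
    -- w = aeval ζ g for some integer polynomial g
    set wE : E := ⟨w, hwE⟩ with hwEdef
    have hwEint : IsIntegral ℤ wE := by
      have : algebraMap E ℂ wE = w := rfl
      rw [← isIntegral_algebraMap_iff (algebraMap E ℂ).injective, this]
      exact hwint
    obtain ⟨u, hu⟩ := (IsIntegralClosure.isIntegral_iff
      (A := Algebra.adjoin ℤ ({ζ'} : Set E))).mp hwEint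
    have humem : (u : E) ∈ (Polynomial.aeval ζ' : ℤ[X] →ₐ[ℤ] E).range := by
      rw [← Algebra.adjoin_singleton_eq_range_aeval]; exact u.2
    obtain ⟨g, hg⟩ := humem
    have hwg : w = aeval ζ g := by
      have h2 : (u : E) = wE := hu
      have h3 : ((aeval ζ' g : E) : ℂ) = aeval ζ g :=
        (Polynomial.aeval_algHom_apply (RingHom.toIntAlgHom (algebraMap E ℂ)) ζ' g).symm
      rw [← h3]
      have hg' : (aeval ζ' g : E) = (u : E) := hg
      rw [hg', h2]
    -- w is conj-invariant
    have hconjw : (starRingEnd ℂ) w = w := hfix w y.2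
    -- the symmetry hypothesis
    have hsym : aeval ζ⁻¹ g = aeval ζ g := by
      have hthis := hconjw
      rw [hwg] at hthis
      have h4 : (RingHom.toIntAlgHom (starRingEnd ℂ)) ζ = ζ⁻¹ := hconjz
      have h5 : (starRingEnd ℂ) ((aeval ζ) g) = aeval ζ⁻¹ g := by
        have h6 := Polynomial.aeval_algHom_apply (RingHom.toIntAlgHom (starRingEnd ℂ)) ζ g
        rw [h4] at h6
        exact h6.symm
      rw [← h5, hthis]
    have hwmem : w ∈ Algebra.adjoin ℤ ({ζ + ζ⁻¹} : Set ℂ) := by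
      rw [hwg]; exact core_sym p hp hodd ζ hζ g hsym
    have hwmem' : w ∈ (Polynomial.aeval (ζ + ζ⁻¹) : ℤ[X] →ₐ[ℤ] ℂ).range := by
      rw [← Algebra.adjoin_singleton_eq_range_aeval]; exact hwmem
    obtain ⟨F, hF⟩ := hwmem'
    have hyF : y = aeval x F := by
      apply hinjK
      rw [halgK, halgK, ← hwdef]
      have hcoe : ((aeval x F : K) : ℂ) = aeval ((x : ℂ)) F :=
        (Polynomial.aeval_algHom_apply (RingHom.toIntAlgHom (algebraMap K ℂ)) x F).symm
      rw [hcoe, hx]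
      exact hF.symm
    rw [hyF]
    exact Polynomial.aeval_mem_adjoin_singleton ℤ x
  · -- easy direction
    refine Algebra.adjoin_le ?_
    intro z hz
    rw [Set.mem_singleton_iff] at hz
    have hzi : IsIntegral ℤ z := by
      rw [hz, ← isIntegral_algebraMap_iff hinjK, halgK, hx]
      exact hηint
    exact hzi
end

section
/- Let K be a Galois number field with ring of integers O, and let x, y ∈ O with |N(x)| = pq and |N(y)| = q, where p and q are rational primes unramified in K with p ≠ q. Then there exists σ ∈ Gal(K/ℚ) such that x/σ(y) ∈ O and |N(x/σ(y))| = p. -/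
open NumberField Ideal

/-- Let `K` be a Galois number field and `x, y` algebraic integers of `K` with
`|N(x)| = p * q` and `|N(y)| = q`, where `p ≠ q` are rational primes unramified
in `K`.  Then for some `σ ∈ Gal(K/ℚ)`, `x / σ(y)` is an algebraic integer of
norm `±p`. -/
theorem quotient_norm (K : Type*) [Field K] [NumberField K] [IsGalois ℚ K]
    (x y : K) (hx : IsIntegral ℤ x) (hy : IsIntegral ℤ y)
    (p q : ℕ) (hp : p.Prime) (hq : q.Prime) (hpq : p ≠ q)
    (hpunram : ∀ P : Ideal (𝓞 K), P.IsMaximal → (p : 𝓞 K) ∈ P →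
      ramificationIdx' (span {(p : ℤ)}) P = 1)
    (hqunram : ∀ P : Ideal (𝓞 K), P.IsMaximal → (q : 𝓞 K) ∈ P →
      ramificationIdx' (span {(q : ℤ)}) P = 1)
    (hnx : (∏ σ : K ≃ₐ[ℚ] K, σ x) = ((p * q : ℕ) : K) ∨
      (∏ σ : K ≃ₐ[ℚ] K, σ x) = -((p * q : ℕ) : K))
    (hny : (∏ σ : K ≃ₐ[ℚ] K, σ y) = (q : K) ∨
      (∏ σ : K ≃ₐ[ℚ] K, σ y) = -(q : K)) :
    ∃ σ : K ≃ₐ[ℚ] K, IsIntegral ℤ (x / σ y) ∧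
      ((∏ τ : K ≃ₐ[ℚ] K, τ (x / σ y)) = (p : K) ∨
        (∏ τ : K ≃ₐ[ℚ] K, τ (x / σ y)) = -(p : K)) := by
  classical
  have hqK : (q : K) ≠ 0 := Nat.cast_ne_zero.mpr hq.pos.ne'
  let g : (K ≃ₐ[ℚ] K) → ((𝓞 K) ≃ₐ[ℤ] (𝓞 K)) := fun σ => galRestrict ℤ ℚ K (𝓞 K) σ
  have hgcoe : ∀ (σ : K ≃ₐ[ℚ] K) (w : (𝓞 K)),
      algebraMap (𝓞 K) K (g σ w) = σ (algebraMap (𝓞 K) K w) := fun σ w =>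
    algebraMap_galRestrict_apply ℤ σ w
  have hg1 : ∀ w : (𝓞 K), g 1 w = w := fun w =>
    RingOfIntegers.coe_injective (by rw [hgcoe]; rfl)
  -- the product of Galois conjugates of `w : (𝓞 K)` is the image of its integer norm
  have hprod : ∀ w : (𝓞 K),
      algebraMap ℤ (𝓞 K) (Algebra.norm ℤ w) = ∏ σ : K ≃ₐ[ℚ] K, g σ w := by
    intro w
    apply RingOfIntegers.coe_injective
    rw [map_prod]
    simp only [hgcoe]
    rw [← Algebra.norm_eq_prod_automorphisms, ← IsScalarTower.algebraMap_apply ℤ (𝓞 K) K,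
      IsScalarTower.algebraMap_apply ℤ ℚ K]
    congr 1
    rw [← Algebra.coe_norm_int]
    simp
  have hcast : ∀ w : (𝓞 K), ((Algebra.norm ℤ w : ℤ) : K) = ∏ σ : K ≃ₐ[ℚ] K, σ (algebraMap (𝓞 K) K w) := by
    intro w
    have := congrArg (algebraMap (𝓞 K) K) (hprod w)
    rw [map_prod] at this
    simp only [hgcoe] at this
    rw [← this, ← IsScalarTower.algebraMap_apply ℤ (𝓞 K) K]
    simp
  -- the elements as algebraic integers
  let X : (𝓞 K) := ⟨x, hx⟩
  let Y : (𝓞 K) := ⟨y, hy⟩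
  have hXx : algebraMap (𝓞 K) K X = x := rfl
  have hYy : algebraMap (𝓞 K) K Y = y := rfl
  -- integer norm values
  have hNX : Algebra.norm ℤ X = ((p * q : ℕ) : ℤ) ∨ Algebra.norm ℤ X = -((p * q : ℕ) : ℤ) := by
    have h := hcast X
    rw [hXx] at h
    rcases hnx with h' | h'
    · left; exact_mod_cast h.trans h'
    · right; exact_mod_cast h.trans h'
  have hNY : Algebra.norm ℤ Y = ((q : ℕ) : ℤ) ∨ Algebra.norm ℤ Y = -((q : ℕ) : ℤ) := by
    have h := hcast Y
    rw [hYy] at h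
    rcases hny with h' | h'
    · left; exact_mod_cast h.trans h'
    · right; exact_mod_cast h.trans h'
  -- every algebraic integer divides (the image of) its norm
  have hdvd : ∀ w : (𝓞 K), w ∣ algebraMap ℤ (𝓞 K) (Algebra.norm ℤ w) := by
    intro w
    rw [hprod w]
    exact dvd_trans (dvd_of_eq (hg1 w).symm)
      (Finset.dvd_prod_of_mem (fun σ : K ≃ₐ[ℚ] K => g σ w) (Finset.mem_univ 1))
  have hXpq : X ∣ ((p * q : ℕ) : (𝓞 K)) := by
    rcases hNX with h | h
    · have := hdvd X; rw [h] at this; simpa using this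
    · have := hdvd X; rw [h] at this
      simp only [map_neg, dvd_neg] at this
      simpa using this
  have hYq : Y ∣ ((q : ℕ) : (𝓞 K)) := by
    rcases hNY with h | h
    · have := hdvd Y; rw [h] at this; simpa using this
    · have := hdvd Y; rw [h] at this
      simp only [map_neg, dvd_neg] at this
      simpa using this
  have hYne : Y ≠ 0 := by
    intro h
    rcases hNY with h' | h' <;> rw [h, Algebra.norm_zero] at h'
    · exact hq.pos.ne' (by exact_mod_cast h'.symm)
    · exact hq.pos.ne' (by exact_mod_cast neg_eq_zero.mp h'.symm)
  have hyne : y ≠ 0 := by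
    intro h
    exact hYne (RingOfIntegers.coe_injective (by rw [hYy, h, map_zero]))
  -- span {X} and (q) are not coprime
  have hIne : span {X} ⊔ span {(q : (𝓞 K))} ≠ ⊤ := by
    intro htop
    have h1 : (1 : (𝓞 K)) ∈ span {X} ⊔ span {(q : (𝓞 K))} := htop ▸ Submodule.mem_top
    rw [Submodule.mem_sup] at h1
    obtain ⟨u, hu, v, hv, huv⟩ := h1
    rw [Ideal.mem_span_singleton'] at hu hv
    obtain ⟨a, rfl⟩ := hu
    obtain ⟨b, rfl⟩ := hv
    obtain ⟨c, hc⟩ := hXpq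
    have h2 : (p : (𝓞 K)) * (q : (𝓞 K)) = X * c := by rw [← Nat.cast_mul]; exact hc
    have hXp : X ∣ (p : (𝓞 K)) := by
      refine ⟨a * (p : (𝓞 K)) + b * c, ?_⟩
      calc (p : (𝓞 K)) = (p : (𝓞 K)) * (a * X + b * (q : (𝓞 K))) := by rw [huv, mul_one]
        _ = a * (p : (𝓞 K)) * X + b * ((p : (𝓞 K)) * (q : (𝓞 K))) := by ring
        _ = a * (p : (𝓞 K)) * X + b * (X * c) := by rw [h2]
        _ = X * (a * (p : (𝓞 K)) + b * c) := by ring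
    have hnd : Algebra.norm ℤ X ∣ Algebra.norm ℤ ((p : (𝓞 K))) := map_dvd (Algebra.norm ℤ) hXp
    have hpnorm : Algebra.norm ℤ ((p : (𝓞 K))) = (p : ℤ) ^
        Fintype.card (Module.Free.ChooseBasisIndex ℤ (𝓞 K)) := by
      rw [show ((p : ℕ) : (𝓞 K)) = algebraMap ℤ (𝓞 K) (p : ℤ) by simp]
      exact Algebra.norm_algebraMap_of_basis (Module.Free.chooseBasis ℤ (𝓞 K)) _
    rw [hpnorm] at hnd
    have hqdvd : (q : ℤ) ∣ (p : ℤ) ^ Fintype.card (Module.Free.ChooseBasisIndex ℤ (𝓞 K)) := by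
      rcases hNX with h | h <;> rw [h] at hnd
      · exact dvd_trans ⟨(p : ℤ), by push_cast; ring⟩ hnd
      · exact dvd_trans ⟨-(p : ℤ), by push_cast; ring⟩ hnd
    have hqdvd' : q ∣ p ^ Fintype.card (Module.Free.ChooseBasisIndex ℤ (𝓞 K)) := by exact_mod_cast hqdvd
    have := (Nat.prime_dvd_prime_iff_eq hq hp).mp (hq.dvd_of_dvd_pow hqdvd')
    exact hpq this.symm
  obtain ⟨M, hMmax, hMle⟩ := Ideal.exists_le_maximal _ hIne
  have hXM : X ∈ M := hMle (Ideal.mem_sup_left (Ideal.mem_span_singleton_self X))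
  have hqM : (q : (𝓞 K)) ∈ M := hMle (Ideal.mem_sup_right (Ideal.mem_span_singleton_self _))
  -- Q = span {Y} is a maximal ideal containing q
  have hQnorm : absNorm (span {Y}) = q := by
    rw [Ideal.absNorm_span_singleton]
    rcases hNY with h | h <;> rw [h] <;> simp
  have hQprime : (span {Y} : Ideal (𝓞 K)).IsPrime :=
    Ideal.isPrime_of_irreducible_absNorm
      (by rw [hQnorm, Nat.irreducible_iff_nat_prime]; exact hq)
  have hQbot : (span {Y} : Ideal (𝓞 K)) ≠ ⊥ := by
    rw [Ne, Ideal.span_singleton_eq_bot]; exact hYne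
  have hQmax : (span {Y} : Ideal (𝓞 K)).IsMaximal := hQprime.isMaximal hQbot
  haveI := hQprime
  have hqQ : (q : (𝓞 K)) ∈ span {Y} := Ideal.mem_span_singleton.mpr hYq
  -- any maximal ideal containing q lies over (q)
  have hcomap : ∀ N : Ideal (𝓞 K), N.IsMaximal → (q : (𝓞 K)) ∈ N →
      comap (algebraMap ℤ (𝓞 K)) N = span {(q : ℤ)} := by
    intro N hN hqN
    have hqirr : Irreducible ((q : ℕ) : ℤ) := (Nat.prime_iff_prime_int.mp hq).irreducible
    have hmaxq : (span {((q : ℕ) : ℤ)} : Ideal ℤ).IsMaximal :=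
      PrincipalIdealRing.isMaximal_of_irreducible hqirr
    have hle : span {((q : ℕ) : ℤ)} ≤ comap (algebraMap ℤ (𝓞 K)) N := by
      rw [Ideal.span_le, Set.singleton_subset_iff]
      simpa using hqN
    exact (hmaxq.eq_of_le (Ideal.comap_ne_top _ hN.ne_top) hle).symm
  -- transitivity of the Galois action: M is a conjugate of span {Y}
  have htrans : ∃ σ : K ≃ₐ[ℚ] K, M = Ideal.map (g σ) (span {Y}) := by
    by_contra hcon
    push_neg at hcon
    have hnotsub : ¬ ((M : Set (𝓞 K)) ⊆
        ⋃ σ ∈ ((Finset.univ : Finset (K ≃ₐ[ℚ] K)) : Set (K ≃ₐ[ℚ] K)), (Ideal.map (g σ) (span {Y}) : Set (𝓞 K))) := by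
      rw [Ideal.subset_union_prime 1 1 (fun σ _ _ _ => Ideal.map_isPrime_of_equiv (g σ))]
      rintro ⟨σ, -, hle⟩
      exact hcon σ (hMmax.eq_of_le (Ideal.map_isPrime_of_equiv (g σ)).ne_top hle)
    obtain ⟨a, haM, haU⟩ := Set.not_subset.mp hnotsub
    simp only [Set.mem_iUnion, SetLike.mem_coe, not_exists, Finset.mem_univ,
      exists_prop, true_and] at haU
    have h1 : algebraMap ℤ (𝓞 K) (Algebra.norm ℤ a) ∈ M := by
      rw [hprod a]
      have hfac : a ∣ ∏ σ : K ≃ₐ[ℚ] K, g σ a :=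
        dvd_trans (dvd_of_eq (hg1 a).symm)
          (Finset.dvd_prod_of_mem (fun σ : K ≃ₐ[ℚ] K => g σ a) (Finset.mem_univ 1))
      obtain ⟨c, hc⟩ := hfac
      rw [hc]
      exact Ideal.mul_mem_right _ _ haM
    have h2 : Algebra.norm ℤ a ∈ comap (algebraMap ℤ (𝓞 K)) M := Ideal.mem_comap.mpr h1
    rw [hcomap M hMmax hqM, ← hcomap _ hQmax hqQ] at h2
    have h3 : ∏ σ : K ≃ₐ[ℚ] K, g σ a ∈ span {Y} := by
      rw [← hprod a]; exact Ideal.mem_comap.mp h2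
    obtain ⟨σ, -, hσ⟩ := (Ideal.IsPrime.prod_mem_iff).mp h3
    have hga : g σ⁻¹ (g σ a) = a := by
      apply RingOfIntegers.coe_injective
      rw [hgcoe, hgcoe]
      exact σ.symm_apply_apply _
    have hmm := Ideal.mem_map_of_mem (g σ⁻¹) hσ
    rw [hga] at hmm
    exact haU σ⁻¹ hmm
  obtain ⟨σ, hMeq⟩ := htrans
  have hmem : X ∈ Ideal.map (g σ) (span {Y}) := hMeq ▸ hXM
  rw [_root_.Ideal.map_span, Set.image_singleton] at hmem
  obtain ⟨z, hz⟩ := Ideal.mem_span_singleton'.mp hmem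
  -- hz : z * g σ Y = X
  have hσy : σ y = algebraMap (𝓞 K) K (g σ Y) := by rw [hgcoe σ Y, hYy]
  have hσyne : σ y ≠ 0 := fun h => hyne (by simpa using congrArg σ.symm h)
  have hquot : x / σ y = algebraMap (𝓞 K) K z := by
    have hxz : x = algebraMap (𝓞 K) K z * σ y := by
      rw [hσy, ← _root_.map_mul, ← hXx, hz]
    rw [hxz, mul_div_cancel_right₀ _ hσyne]
  refine ⟨σ, ?_, ?_⟩
  · rw [hquot]; exact RingOfIntegers.isIntegral_coe z
  · -- the norm computation is independent of integrality
    have hsplit : (∏ τ : K ≃ₐ[ℚ] K, τ (x / σ y)) =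
        (∏ τ : K ≃ₐ[ℚ] K, τ x) / (∏ τ : K ≃ₐ[ℚ] K, τ (σ y)) := by
      rw [← Finset.prod_div_distrib]
      exact Finset.prod_congr rfl fun τ _ => map_div₀ (τ : K →+* K) x (σ y)
    have hre : (∏ τ : K ≃ₐ[ℚ] K, τ (σ y)) = ∏ τ : K ≃ₐ[ℚ] K, τ y :=
      Fintype.prod_equiv (Equiv.mulRight σ) _ _ fun τ => rfl
    rw [hsplit, hre]
    rcases hnx with h | h <;> rcases hny with h' | h' <;> rw [h, h']
    · left; push_cast; exact mul_div_cancel_right₀ _ hqK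
    · right; push_cast; rw [div_neg, mul_div_cancel_right₀ _ hqK]
    · right; push_cast; rw [neg_div, mul_div_cancel_right₀ _ hqK]
    · left; push_cast; rw [neg_div_neg_eq, mul_div_cancel_right₀ _ hqK]
end
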